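/- Let f : ℝ^m × ℝ^n → ℝ and h : ℝ^m × ℝ^n → ℝ be continuous, let f*(x) = inf{ f(x,y) : y ∈ ℝ^n, h(x,y) ≤ 0 }, and suppose 0 is not a local optimal value of h with respect to y: for every x and every y with h(x,y) = 0, every neighborhood of y contains a point y' with h(x,y') < 0. Fix x̄ with { y : h(x̄,y) ≤ 0 } nonempty and f*(x̄) finite. Then for every ε > 0 there exist ŷ ∈ ℝ^n and δ > 0 such that f(x̄,ŷ) < f*(x̄) + ε and h(x̄,ŷ) ≤ −δ; that is, the infimum f*(x̄) can be approximated arbitrarily well by strictly feasible points. -/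
import Mathlib


open Filter Topology

noncomputable section

/-- `ℝ^m` as a Euclidean space. -/
abbrev Evec (m : ℕ) := EuclideanSpace ℝ (Fin m)

/-- The lower-level value function `f*(x) = inf { f(x,y) : h(x,y) ≤ 0 }`,
taken in the extended reals (so `inf ∅ = +∞`). -/
def lowerValue {m n : ℕ} (f h : Evec m → Evec n → ℝ) (x : Evec m) : EReal :=
  ⨅ y ∈ {y : Evec n | h x y ≤ 0}, ((f x y : ℝ) : EReal)

end

theorem strictly_feasible_approximation
    {m n : ℕ} (f h : Evec m → Evec n → ℝ)
    (hfc : Continuous fun p : Evec m × Evec n => f p.1 p.2)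
    (hhc : Continuous fun p : Evec m × Evec n => h p.1 p.2)
    -- 0 is not a local optimal value of h with respect to y:
    (hA3 : ∀ (x : Evec m) (y : Evec n), h x y = 0 →
      ∀ ε > (0 : ℝ), ∃ y', ‖y' - y‖ < ε ∧ h x y' < 0)
    (xbar : Evec m)
    (hfeas : {y : Evec n | h xbar y ≤ 0}.Nonempty)
    (hfin : lowerValue f h xbar ≠ ⊤ ∧ lowerValue f h xbar ≠ ⊥) :
    ∀ ε > (0 : ℝ), ∃ (yhat : Evec n) (δ : ℝ), 0 < δ ∧
      ((f xbar yhat : ℝ) : EReal) < lowerValue f h xbar + (ε : EReal) ∧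
      h xbar yhat ≤ -δ := by
  intro ε hε
  set v := lowerValue f h xbar with hv
  have hvr : ((v.toReal : ℝ) : EReal) = v := EReal.coe_toReal hfin.1 hfin.2
  set r := v.toReal with hrdef
  -- find y feasible with f xbar y < r + ε/2
  have hlt : v < ((r + ε/2 : ℝ) : EReal) := by
    rw [← hvr]; exact_mod_cast (by linarith : r < r + ε/2)
  have hlt' : (⨅ y ∈ {y : Evec n | h xbar y ≤ 0}, ((f xbar y : ℝ) : EReal)) <
      ((r + ε/2 : ℝ) : EReal) := hlt
  rw [iInf_lt_iff] at hlt'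
  obtain ⟨y, hy⟩ := hlt'
  rw [iInf_lt_iff] at hy
  obtain ⟨hyS, hfy⟩ := hy
  have hyS' : h xbar y ≤ 0 := hyS
  have hfy' : f xbar y < r + ε/2 := by exact_mod_cast hfy
  have key : ∀ y' : Evec n, f xbar y' < r + ε → h xbar y' < 0 →
      ∃ (yhat : Evec n) (δ : ℝ), 0 < δ ∧
        ((f xbar yhat : ℝ) : EReal) < v + (ε : EReal) ∧ h xbar yhat ≤ -δ := by
    intro y' hf' hh'
    refine ⟨y', -h xbar y', by linarith, ?_, by linarith⟩
    have : v + (ε : EReal) = ((r + ε : ℝ) : EReal) := by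
      rw [← hvr, ← EReal.coe_add]
    rw [this]
    exact_mod_cast hf'
  rcases lt_or_eq_of_le hyS' with hneg | hzero
  · exact key y (by linarith) hneg
  · -- h xbar y = 0 : use continuity of f in y and hA3
    have hcont : ContinuousAt (fun y' => f xbar y') y :=
      (hfc.comp (Continuous.prodMk_right xbar)).continuousAt
    have hgap : (0:ℝ) < (r + ε) - f xbar y := by linarith
    obtain ⟨δ', hδ', hball⟩ := Metric.continuousAt_iff.mp hcont _ hgap
    obtain ⟨y', hy'n, hy'neg⟩ := hA3 xbar y hzero δ' hδ'
    have hd : dist y' y < δ' := by rwa [dist_eq_norm]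
    have := hball hd
    rw [Real.dist_eq] at this
    have hf' : f xbar y' < r + ε := by
      have := abs_lt.mp this
      linarith [this.1, this.2]
    exact key y' hf' hy'neg
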